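/- Let k' ≥ 2, let S be an 𝔽_q-subspace of 𝔽_{q^n} with dim_{𝔽_q}(S) = k', let μ ∈ 𝔽_{q^n} ∖ 𝔽_q, let T = ⟨1, μ⟩_{𝔽_q}, and let U = S × T. Then the number of points of weight two in L_U different from ⟨(1,0)⟩_{𝔽_{q^n}} is q^j, where j = dim_{𝔽_q}(S ∩ μS). -/

import Mathlib

open Submodule

/-- The span `⟨1, μ, …, μ^{m-1}⟩_{F_q}`. -/
noncomputable def pows (Fq : Type*) {Fqn : Type*} [Field Fq] [Field Fqn] [Algebra Fq Fqn]
    (μ : Fqn) (m : ℕ) : Submodule Fq Fqn :=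
  Submodule.span Fq (Set.range fun i : Fin m => μ ^ (i : ℕ))

/-- Multiplication of a subspace by a scalar: `b · W`. -/
noncomputable def bmul (Fq : Type*) {Fqn : Type*} [Field Fq] [Field Fqn] [Algebra Fq Fqn]
    (b : Fqn) (W : Submodule Fq Fqn) : Submodule Fq Fqn :=
  W.map (LinearMap.mulLeft Fq b)

/-- The `F_q`-linear set in `PG(1, q^n)` defined by an `F_q`-subspace `U` of `F_{q^n}²`:
the set of projective points `⟨v⟩_{F_{q^n}}`, `v ∈ U \ {0}`, viewed as
one-dimensional `F_{q^n}`-subspaces of `F_{q^n}²`. -/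
def linSet {Fq Fqn : Type*} [Field Fq] [Field Fqn] [Algebra Fq Fqn]
    (U : Submodule Fq (Fqn × Fqn)) : Set (Submodule Fqn (Fqn × Fqn)) :=
  {P | ∃ v : Fqn × Fqn, v ≠ 0 ∧ v ∈ U ∧ P = Submodule.span Fqn {v}}

/-- The weight of a projective point `P` in the linear set defined by `U`:
`w_{L_U}(P) = dim_{F_q}(U ∩ P)`. -/
noncomputable def weight {Fq Fqn : Type*} [Field Fq] [Field Fqn] [Algebra Fq Fqn]
    (U : Submodule Fq (Fqn × Fqn)) (P : Submodule Fqn (Fqn × Fqn)) : ℕ :=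
  Module.finrank Fq ↥(U ⊓ P.restrictScalars Fq)

/-- Let `k' ≥ 2`, `S` an `F_q`-subspace of `F_{q^n}` of dimension `k'`,
`μ ∈ F_{q^n} \ F_q`, `T = ⟨1, μ⟩_{F_q}`, `U = S × T`. Then the number of points of
weight two in `L_U` different from `⟨(1,0)⟩` is `q^j`, where `j = dim_{F_q}(S ∩ μS)`. -/
theorem stmt5 (Fq Fqn : Type*) [Field Fq] [Field Fqn] [Algebra Fq Fqn] [Fintype Fq]
    (q n : ℕ) (hq : Fintype.card Fq = q) (hn : Module.finrank Fq Fqn = n)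
    (k' : ℕ) (hk' : 2 ≤ k')
    (S : Submodule Fq Fqn) (hS : Module.finrank Fq ↥S = k')
    (μ : Fqn) (hμ : μ ∉ Set.range (algebraMap Fq Fqn))
    (T : Submodule Fq Fqn) (hT : T = pows Fq μ 2)
    (U : Submodule Fq (Fqn × Fqn)) (hU : U = S.prod T) :
    Set.ncard
        {P | P ∈ linSet U ∧ weight U P = 2 ∧ P ≠ Submodule.span Fqn {((1 : Fqn), (0 : Fqn))}}
      = q ^ Module.finrank Fq ↥(S ⊓ bmul Fq μ S) := by
  subst hq hU
  have hμ0 : μ ≠ 0 := by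
    rintro rfl; exact hμ ⟨0, by simp⟩
  -- the scalar-multiplication-by-μ linear map
  set f : Fqn →ₗ[Fq] Fqn := LinearMap.mulLeft Fq μ with hf
  have hfapp : ∀ x, f x = μ * x := fun x => rfl
  have hfinj : Function.Injective f := fun x y h => by
    have : μ * x = μ * y := h
    exact mul_left_cancel₀ hμ0 this
  set W : Submodule Fq Fqn := S ⊓ Submodule.comap f S with hW
  have hWmem : ∀ a : Fqn, a ∈ W ↔ a ∈ S ∧ μ * a ∈ S := by
    intro a; rw [hW, Submodule.mem_inf, Submodule.mem_comap, hfapp]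
  -- facts about T
  have hT1 : (1 : Fqn) ∈ T := by
    rw [hT]; exact subset_span ⟨0, by simp⟩
  have hTμ : μ ∈ T := by
    rw [hT]; exact subset_span ⟨1, by simp⟩
  have hli : LinearIndependent Fq (fun i : Fin 2 => μ ^ (i : ℕ)) := by
    have hfam : (fun i : Fin 2 => μ ^ (i : ℕ)) = ![1, μ] := by
      funext i; fin_cases i <;> simp
    rw [hfam, linearIndependent_fin2]
    refine ⟨by simpa using hμ0, ?_⟩
    intro a ha
    simp only [Matrix.cons_val_one, Matrix.head_cons, Matrix.cons_val_zero] at ha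
    have hmul : algebraMap Fq Fqn a * μ = 1 := by
      rw [← Algebra.smul_def, ha]
    have hμeq : μ = (algebraMap Fq Fqn a)⁻¹ := eq_inv_of_mul_eq_one_right hmul
    exact hμ ⟨a⁻¹, by rw [map_inv₀, hμeq]⟩
  have hTfr : Module.finrank Fq T = 2 := by
    rw [hT, pows, finrank_span_eq_card hli, Fintype.card_fin]
  have hTfd : FiniteDimensional Fq T := by
    rw [hT, pows]
    exact FiniteDimensional.span_of_finite Fq (Set.finite_range _)
  -- the embedding λ ↦ (a*λ, λ)
  have key : ∀ a : Fqn,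
      (S.prod T) ⊓ (Submodule.span Fqn {(a, (1:Fqn))}).restrictScalars Fq
        = Submodule.map ((LinearMap.mulLeft Fq a).prod LinearMap.id)
            (T ⊓ Submodule.comap (LinearMap.mulLeft Fq a) S) := by
    intro a
    ext ⟨x, y⟩
    simp only [Submodule.mem_inf, Submodule.mem_prod, Submodule.restrictScalars_mem,
      Submodule.mem_span_singleton, Submodule.mem_map, Submodule.mem_comap,
      LinearMap.prod_apply, Function.prod, LinearMap.mulLeft_apply, LinearMap.id_coe, id_eq,
      Prod.mk.injEq, Prod.smul_mk, smul_eq_mul, mul_one]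
    constructor
    · rintro ⟨⟨hxS, hyT⟩, c, hca, rfl⟩
      exact ⟨c, ⟨hyT, by rw [mul_comm, hca]; exact hxS⟩, ⟨by rw [mul_comm]; exact hca, rfl⟩⟩
    · rintro ⟨l, ⟨hlT, hlS⟩, rfl, rfl⟩
      exact ⟨⟨hlS, hlT⟩, l, mul_comm l a, rfl⟩
  have ginj : ∀ a : Fqn,
      Function.Injective ((LinearMap.mulLeft Fq a).prod (LinearMap.id (R := Fq) (M := Fqn))) := by
    intro a x y h
    have := congrArg Prod.snd h
    simpa using this
  have wkey : ∀ a : Fqn, weight (S.prod T) (Submodule.span Fqn {(a, (1:Fqn))})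
      = Module.finrank Fq ↥(T ⊓ Submodule.comap (LinearMap.mulLeft Fq a) S) := by
    intro a
    rw [weight, key a]
    exact (Submodule.equivMapOfInjective _ (ginj a) _).finrank_eq.symm
  have w2 : ∀ a : Fqn,
      weight (S.prod T) (Submodule.span Fqn {(a, (1:Fqn))}) = 2 ↔ a ∈ W := by
    intro a
    rw [wkey a, hWmem]
    constructor
    · intro h
      have heq : T ⊓ Submodule.comap (LinearMap.mulLeft Fq a) S = T :=
        Submodule.eq_of_le_of_finrank_le inf_le_left (by rw [h, hTfr])
      have h1 : (1:Fqn) ∈ T ⊓ Submodule.comap (LinearMap.mulLeft Fq a) S := by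
        rw [heq]; exact hT1
      have h2 : μ ∈ T ⊓ Submodule.comap (LinearMap.mulLeft Fq a) S := by
        rw [heq]; exact hTμ
      refine ⟨by simpa using h1.2, ?_⟩
      have := h2.2
      simpa [mul_comm] using this
    · rintro ⟨haS, haμ⟩
      have heq : T ⊓ Submodule.comap (LinearMap.mulLeft Fq a) S = T := by
        rw [inf_eq_left, hT, pows, Submodule.span_le]
        rintro x ⟨i, rfl⟩
        fin_cases i
        · simpa using haS
        · simpa [mul_comm] using haμ
      rw [heq, hTfr]
  -- the set of points is the image of W under a ↦ ⟨(a,1)⟩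
  have hinj : Function.Injective (fun a : Fqn => Submodule.span Fqn {(a, (1:Fqn))}) := by
    intro a b h
    have h' : Submodule.span Fqn {((a:Fqn), (1:Fqn))} = Submodule.span Fqn {((b:Fqn), (1:Fqn))} := h
    have hmem : ((a:Fqn), (1:Fqn)) ∈ Submodule.span Fqn {((b:Fqn), (1:Fqn))} := by
      rw [← h']; exact Submodule.mem_span_singleton_self _
    obtain ⟨c, hc⟩ := Submodule.mem_span_singleton.1 hmem
    have h1 := congrArg Prod.fst hc
    have h2 := congrArg Prod.snd hc
    simp only [Prod.smul_fst, Prod.smul_snd, smul_eq_mul, mul_one] at h1 h2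
    rw [h2, one_mul] at h1
    exact h1.symm
  have hset : {P | P ∈ linSet (S.prod T) ∧ weight (S.prod T) P = 2 ∧
        P ≠ Submodule.span Fqn {((1 : Fqn), (0 : Fqn))}}
      = (fun a : Fqn => Submodule.span Fqn {(a, (1:Fqn))}) '' (W : Set Fqn) := by
    ext P
    constructor
    · rintro ⟨⟨⟨s, t⟩, hv0, hvU, rfl⟩, hw2, hne⟩
      by_cases ht : t = 0
      · subst ht
        exfalso
        apply hne
        have hs : s ≠ 0 := by
          rintro rfl; exact hv0 rfl
        have : ((s:Fqn), (0:Fqn)) = s • ((1:Fqn), (0:Fqn)) := by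
          simp
        rw [this]
        exact Submodule.span_singleton_smul_eq (IsUnit.mk0 s hs) _
      · have hsp : Submodule.span Fqn {((s:Fqn), (t:Fqn))}
            = Submodule.span Fqn {((s * t⁻¹ : Fqn), (1:Fqn))} := by
          have : ((s:Fqn), (t:Fqn)) = t • ((s * t⁻¹ : Fqn), (1:Fqn)) := by
            simp only [Prod.smul_mk, smul_eq_mul, mul_one, Prod.mk.injEq]
            refine ⟨?_, trivial⟩
            field_simp
          rw [this]
          exact Submodule.span_singleton_smul_eq (IsUnit.mk0 t ht) _
        refine ⟨s * t⁻¹, ?_, hsp.symm⟩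
        exact (w2 _).1 (by rw [← hsp]; exact hw2)
    · rintro ⟨a, haW, rfl⟩
      have haW' : a ∈ W := haW
      refine ⟨⟨(a, 1), by simp, ?_, rfl⟩, (w2 a).2 haW', ?_⟩
      · exact ⟨((hWmem a).1 haW').1, hT1⟩
      · intro h
        have : ((a:Fqn), (1:Fqn)) ∈ Submodule.span Fqn {((1:Fqn), (0:Fqn))} := by
          rw [← h]; exact Submodule.mem_span_singleton_self _
        obtain ⟨c, hc⟩ := Submodule.mem_span_singleton.1 this
        have := congrArg Prod.snd hc
        simp at this
  rw [hset, Set.ncard_image_of_injective _ hinj]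
  -- finiteness
  have hSfd : FiniteDimensional Fq S := FiniteDimensional.of_finrank_pos (by omega)
  have hWfd : FiniteDimensional Fq W := by
    rw [hW]; infer_instance
  have hWfin : Finite W := Module.finite_of_finite Fq
  -- cardinality of W
  have hcard : Set.ncard (W : Set Fqn) = Fintype.card Fq ^ Module.finrank Fq W := by
    have : Set.ncard (W : Set Fqn) = Nat.card W := (Nat.card_coe_set_eq _).symm
    rw [this]
    haveI : Fintype W := Fintype.ofFinite _
    rw [Nat.card_eq_fintype_card]
    exact Module.card_eq_pow_finrank
  rw [hcard]
  congr 1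
  -- finrank W = finrank (S ⊓ μS)
  have hmap : Submodule.map f W = S ⊓ bmul Fq μ S := by
    ext x
    simp only [hW, Submodule.mem_map, Submodule.mem_inf, Submodule.mem_comap, bmul,
      LinearMap.mulLeft_apply, hfapp]
    constructor
    · rintro ⟨y, ⟨hyS, hys⟩, rfl⟩
      exact ⟨hys, y, hyS, rfl⟩
    · rintro ⟨hxS, y, hyS, rfl⟩
      exact ⟨y, ⟨hyS, hxS⟩, rfl⟩
  rw [← hmap]
  exact (Submodule.equivMapOfInjective f hfinj W).finrank_eq
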